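/- Let k be a field of characteristic zero and M a generalized Coxeter matrix. Then the generalized nil-Coxeter algebra NC(M) admits no bialgebra structure: there is no algebra homomorphism Δ : NC(M) → NC(M) ⊗ NC(M) and counit ε satisfying the counit axioms. -/

import Mathlib

/-- The alternating word `x y x y ⋯` of length `len` on two elements of a monoid. -/
def altProd {A : Type} [Monoid A] (x y : A) (len : ℕ) : A :=
  ((List.range len).map fun t => if t % 2 = 0 then x else y).prod

/-- Relations of the generalized nil-Coxeter algebra `NC(M)` of a generalized Coxeter
matrix `M : I → I → ℕ` (`M i j = 0` encodes `m_{ij} = ∞`): the braid relations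
`T_i T_j T_i ⋯ = T_j T_i T_j ⋯` (`M i j` factors on each side, for `i ≠ j` with
`M i j ≠ 0`) and the order relations `T_i^{M i i} = 0`. -/
inductive GCRel (k : Type) [CommRing k] {I : Type} (M : I → I → ℕ) :
    FreeAlgebra k I → FreeAlgebra k I → Prop
  | braid (i j : I) (h : i ≠ j) (hm : M i j ≠ 0) :
      GCRel k M (altProd (FreeAlgebra.ι k i) (FreeAlgebra.ι k j) (M i j))
        (altProd (FreeAlgebra.ι k j) (FreeAlgebra.ι k i) (M i j))
  | order (i : I) : GCRel k M (FreeAlgebra.ι k i ^ M i i) 0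

/-- The generalized nil-Coxeter algebra `NC(M)`. -/
abbrev NCM (k : Type) [CommRing k] {I : Type} (M : I → I → ℕ) := RingQuot (GCRel k M)

/-- The generator `T_i` of `NC(M)`. -/
noncomputable def TgM (k : Type) [CommRing k] {I : Type} (M : I → I → ℕ) (i : I) :
    NCM k M :=
  RingQuot.mkAlgHom k (GCRel k M) (FreeAlgebra.ι k i)

lemma map_altProd {A B F : Type} [Monoid A] [Monoid B] [FunLike F A B]
    [MonoidHomClass F A B] (f : F) (u v : A) (n : ℕ) :
    f (altProd u v n) = altProd (f u) (f v) n := by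
  unfold altProd
  rw [map_list_prod, List.map_map]
  congr 1
  apply List.map_congr_left
  intro t _
  simp [Function.comp, apply_ite f]

lemma altProd_eq_zero {C : Type} [MonoidWithZero C] {u v : C} {n : ℕ} (hn : 2 ≤ n)
    (h : u = 0 ∨ v = 0) : altProd u v n = 0 := by
  apply List.prod_eq_zero
  rcases h with h | h
  · exact List.mem_map.2 ⟨0, List.mem_range.2 (by omega), by simp [h]⟩
  · exact List.mem_map.2 ⟨1, List.mem_range.2 (by omega), by simp [h]⟩

/-- Order relation gives `T_j ^ (M j j) = 0` in `NC(M)`. -/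
lemma TgM_pow_eq_zero (k : Type) [CommRing k] {I : Type} (M : I → I → ℕ) (j : I) :
    TgM k M j ^ M j j = 0 := by
  unfold TgM
  rw [← map_pow, RingQuot.mkAlgHom_rel k (GCRel.order j), map_zero]

/-- Existence of the one-variable evaluation representation. -/
lemma exists_pi (k : Type) [Field k] {I : Type} [DecidableEq I] (M : I → I → ℕ)
    (hdiag : ∀ i, 2 ≤ M i i) (hoff : ∀ i j, i ≠ j → M i j = 0 ∨ 2 ≤ M i j)
    (i : I) {C : Type} [CommRing C] [Algebra k C] (x : C) (hx : x ^ M i i = 0) :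
    ∃ π : NCM k M →ₐ[k] C, ∀ j, π (TgM k M j) = if j = i then x else 0 := by
  set f : I → C := fun j => if j = i then x else 0 with hf
  have hrel : ∀ ⦃u v : FreeAlgebra k I⦄, GCRel k M u v →
      (FreeAlgebra.lift k f) u = (FreeAlgebra.lift k f) v := by
    intro u v h
    cases h with
    | braid i' j' hne hm =>
      have h2 : 2 ≤ M i' j' := (hoff i' j' hne).resolve_left hm
      rw [map_altProd, map_altProd]
      have hzero : f i' = 0 ∨ f j' = 0 := by
        by_cases hi : i' = i
        · right
          have hj : j' ≠ i := fun hj => hne (hi.trans hj.symm)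
          simp [hf, hj]
        · left; simp [hf, hi]
      rw [FreeAlgebra.lift_ι_apply, FreeAlgebra.lift_ι_apply,
        altProd_eq_zero h2 hzero, altProd_eq_zero h2 hzero.symm]
    | order i' =>
      rw [map_pow, map_zero, FreeAlgebra.lift_ι_apply]
      by_cases hi : i' = i
      · subst hi; simp only [hf, if_pos rfl]; exact hx
      · simp only [hf, if_neg hi]
        have h0 : M i' i' ≠ 0 := by have := hdiag i'; omega
        exact zero_pow h0
  refine ⟨RingQuot.liftAlgHom k ⟨FreeAlgebra.lift k f, hrel⟩, fun j => ?_⟩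
  unfold TgM
  rw [RingQuot.liftAlgHom_mkAlgHom_apply, FreeAlgebra.lift_ι_apply]

/-- Divisibility of `π a - ε a` for representation `π` killing all generators mod `x`. -/
lemma dvd_sub_counit (k : Type) [Field k] {I : Type} (M : I → I → ℕ)
    {C : Type} [CommRing C] [Algebra k C] (π : NCM k M →ₐ[k] C) (ε : NCM k M →ₐ[k] k)
    (x : C) (hπ : ∀ j, x ∣ π (TgM k M j)) (hε : ∀ j, ε (TgM k M j) = 0) :
    ∀ a : NCM k M, x ∣ π a - algebraMap k C (ε a) := by
  intro a
  obtain ⟨b, rfl⟩ := RingQuot.mkAlgHom_surjective k (GCRel k M) a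
  induction b using FreeAlgebra.induction with
  | grade0 r =>
    rw [AlgHom.commutes, AlgHom.commutes, AlgHom.commutes]
    simp only [Algebra.algebraMap_self, RingHom.id_apply, sub_self]
    exact dvd_zero x
  | grade1 j =>
    have : RingQuot.mkAlgHom k (GCRel k M) (FreeAlgebra.ι k j) = TgM k M j := rfl
    rw [this, hε j, map_zero, sub_zero]
    exact hπ j
  | mul a b ha hb =>
    rw [map_mul]
    have key : π (RingQuot.mkAlgHom k (GCRel k M) a * RingQuot.mkAlgHom k (GCRel k M) b)
        - algebraMap k C (ε (RingQuot.mkAlgHom k (GCRel k M) a * RingQuot.mkAlgHom k (GCRel k M) b))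
        = π (RingQuot.mkAlgHom k (GCRel k M) a) *
            (π (RingQuot.mkAlgHom k (GCRel k M) b) - algebraMap k C (ε (RingQuot.mkAlgHom k (GCRel k M) b)))
          + (π (RingQuot.mkAlgHom k (GCRel k M) a) - algebraMap k C (ε (RingQuot.mkAlgHom k (GCRel k M) a)))
            * algebraMap k C (ε (RingQuot.mkAlgHom k (GCRel k M) b)) := by
      rw [map_mul, map_mul, map_mul]; ring
    rw [key]
    exact dvd_add (hb.mul_left _) (ha.mul_right _)
  | add a b ha hb =>
    rw [map_add]
    have key : π (RingQuot.mkAlgHom k (GCRel k M) a + RingQuot.mkAlgHom k (GCRel k M) b)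
        - algebraMap k C (ε (RingQuot.mkAlgHom k (GCRel k M) a + RingQuot.mkAlgHom k (GCRel k M) b))
        = (π (RingQuot.mkAlgHom k (GCRel k M) a) - algebraMap k C (ε (RingQuot.mkAlgHom k (GCRel k M) a)))
          + (π (RingQuot.mkAlgHom k (GCRel k M) b) - algebraMap k C (ε (RingQuot.mkAlgHom k (GCRel k M) b))) := by
      rw [map_add, map_add, map_add]; ring
    rw [key]
    exact dvd_add ha hb

lemma key_pow {C : Type} [CommRing C] (x y g : C) (m : ℕ) (hm : 2 ≤ m)
    (hx : x ^ m = 0) (hy : y ^ 2 = 0) :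
    (x + y + x * y * g) ^ m = m • (x ^ (m - 1) * y) := by
  have hyr : ∀ r, 2 ≤ r → y ^ r = 0 := by
    intro r hr
    have : y ^ r = y ^ 2 * y ^ (r - 2) := by rw [← pow_add]; congr 1; omega
    rw [this, hy, zero_mul]
  have hxr : ∀ r, m ≤ r → x ^ r = 0 := by
    intro r hr
    have : x ^ r = x ^ m * x ^ (r - m) := by rw [← pow_add]; congr 1; omega
    rw [this, hx, zero_mul]
  have ht : ∀ r, 2 ≤ r → (x * y * g) ^ r = 0 := by
    intro r hr
    rw [mul_pow, mul_pow, hyr r hr, mul_zero, zero_mul]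
  have s1 : (x + y) ^ m = m • (x ^ (m - 1) * y) := by
    rw [add_pow]
    rw [Finset.sum_eq_single (m - 1)]
    · have h1 : m - (m - 1) = 1 := by omega
      have h2 : m.choose (m - 1) = m := by
        have := Nat.choose_symm (n := m) (k := 1) (by omega)
        rw [this, Nat.choose_one_right]
      rw [h1, h2, pow_one, nsmul_eq_mul]
      ring
    · intro b _ hb
      rcases le_or_gt m b with h | h
      · rcases eq_or_lt_of_le h with rfl | h'
        · rw [hx, zero_mul, zero_mul]
        · rw [hxr b (by omega), zero_mul, zero_mul]
      · have : 2 ≤ m - b := by omega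
        rw [hyr _ this, mul_zero, zero_mul]
    · intro h
      exact absurd (Finset.mem_range.2 (by omega)) h
  have s2 : (x + y) ^ (m - 1) * (x * y * g) = 0 := by
    rw [add_pow, Finset.sum_mul]
    apply Finset.sum_eq_zero
    intro r hr
    have hr' : r < m := by
      have := Finset.mem_range.1 hr; omega
    have e : x ^ r * y ^ (m - 1 - r) * (m - 1).choose r * (x * y * g) =
        x ^ (r + 1) * y ^ (m - 1 - r + 1) * (((m - 1).choose r : C) * g) := by
      rw [pow_succ, pow_succ]; ring
    rw [e]
    rcases eq_or_lt_of_le (Nat.le_of_lt_succ (by omega : r < (m - 1) + 1)) with rfl | h'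
    · rw [show m - 1 + 1 = m by omega, hx, zero_mul, zero_mul]
    · have : 2 ≤ m - 1 - r + 1 := by omega
      rw [hyr _ this, mul_zero, zero_mul]
  rw [add_pow, Finset.sum_eq_single m]
  · simp [s1]
  · intro b hb hbm
    have hb' : b < m := by have := Finset.mem_range.1 hb; omega
    rcases eq_or_ne b (m - 1) with rfl | h'
    · rw [show m - (m - 1) = 1 by omega, pow_one, s2, zero_mul]
    · rw [ht (m - b) (by omega), mul_zero, zero_mul]
  · intro h
    exact absurd (Finset.mem_range.2 (by omega)) h


set_option maxHeartbeats 4000000 in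
set_option synthInstance.maxHeartbeats 400000 in
set_option linter.unusedVariables false in
open TensorProduct in
/-- For `k` a field of characteristic zero and `M` a generalized Coxeter matrix, the
algebra `NC(M)` admits no bialgebra structure: there is no algebra-homomorphism
coproduct `Δ` with a counit `ε` satisfying the counit axioms. -/
theorem NCM_no_bialgebra (k : Type) [Field k] [CharZero k]
    (I : Type) [Fintype I] [Nonempty I] (M : I → I → ℕ)
    (hsymm : ∀ i j, M i j = M j i) (hdiag : ∀ i, 2 ≤ M i i)
    (hoff : ∀ i j, i ≠ j → M i j = 0 ∨ 2 ≤ M i j) :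
    ¬ ∃ (Δ : NCM k M →ₐ[k] NCM k M ⊗[k] NCM k M) (ε : NCM k M →ₐ[k] k),
        (∀ x : NCM k M,
          TensorProduct.lid k (NCM k M)
            (TensorProduct.map ε.toLinearMap LinearMap.id (Δ x)) = x) ∧
        (∀ x : NCM k M,
          TensorProduct.rid k (NCM k M)
            (TensorProduct.map LinearMap.id ε.toLinearMap (Δ x)) = x) := by
  classical
  rintro ⟨Δ, ε, hL, hR⟩
  obtain ⟨i⟩ := ‹Nonempty I›
  set m := M i i with hm_def
  have hm2 : 2 ≤ m := hdiag i
  -- the target algebra C = (k[X]/(X^m))[ε]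
  let A : Type := Polynomial k ⧸ Ideal.span {(Polynomial.X : Polynomial k) ^ m}
  let a : A := Ideal.Quotient.mk _ Polynomial.X
  let C : Type := DualNumber A
  let x : C := TrivSqZeroExt.inl a
  let y : C := DualNumber.eps
  have ham : a ^ m = 0 := by
    show (Ideal.Quotient.mk _ Polynomial.X) ^ m = 0
    rw [← map_pow]
    exact Ideal.Quotient.eq_zero_iff_mem.2 (Ideal.subset_span rfl)
  have hxm : x ^ m = 0 := by
    show (TrivSqZeroExt.inl a) ^ m = 0
    rw [TrivSqZeroExt.inl_pow, ham, TrivSqZeroExt.inl_zero]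
  have hy2 : y ^ 2 = 0 := by
    show DualNumber.eps ^ 2 = 0
    rw [sq, DualNumber.eps_mul_eps]
  have hym : y ^ m = 0 := by
    have hsplit : y ^ m = y ^ 2 * y ^ (m - 2) := by
      rw [← pow_add]; congr 1; omega
    rw [hsplit, hy2, zero_mul]
  have hane : a ^ (m - 1) ≠ 0 := by
    intro h
    have h' : (Ideal.Quotient.mk (Ideal.span {(Polynomial.X : Polynomial k) ^ m}))
        (Polynomial.X ^ (m - 1)) = 0 := by
      rw [map_pow]; exact h
    have hmem := Ideal.Quotient.eq_zero_iff_mem.1 h'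
    rw [Ideal.mem_span_singleton, Polynomial.X_pow_dvd_iff] at hmem
    have := hmem (m - 1) (by omega)
    rw [Polynomial.coeff_X_pow] at this
    simp at this
  have hxyne : x ^ (m - 1) * y ≠ 0 := by
    have hcalc : x ^ (m - 1) * y = TrivSqZeroExt.inr (a ^ (m - 1)) := by
      show (TrivSqZeroExt.inl a) ^ (m - 1) * DualNumber.eps = _
      rw [TrivSqZeroExt.inl_pow]
      show TrivSqZeroExt.inl (a ^ (m-1)) * TrivSqZeroExt.inr 1 = _
      rw [TrivSqZeroExt.inl_mul_inr, smul_eq_mul, mul_one]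
    rw [hcalc]
    intro h
    exact hane (by simpa using congrArg TrivSqZeroExt.snd h)
  -- counit kills generators
  have hε0 : ∀ j, ε (TgM k M j) = 0 := by
    intro j
    have h1 : ε (TgM k M j) ^ M j j = 0 := by
      rw [← map_pow, TgM_pow_eq_zero, map_zero]
    have hj : M j j ≠ 0 := by have := hdiag j; omega
    exact (pow_eq_zero_iff hj).1 h1
  -- the two representations and their tensor product
  obtain ⟨π1, hπ1⟩ := exists_pi k M hdiag hoff i x hxm
  obtain ⟨π2, hπ2⟩ := exists_pi k M hdiag hoff i y hym
  let ρ : NCM k M ⊗[k] NCM k M →ₐ[k] C :=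
    Algebra.TensorProduct.lift π1 π2 (fun u v => mul_comm (π1 u) (π2 v))
  have hρ_tmul : ∀ (u v : NCM k M), ρ (u ⊗ₜ[k] v) = π1 u * π2 v := fun u v =>
    Algebra.TensorProduct.lift_tmul π1 π2 _ u v
  set T := TgM k M i with hT_def
  have hπ1T : π1 T = x := by rw [hT_def, hπ1 i, if_pos rfl]
  have hπ2T : π2 T = y := by rw [hT_def, hπ2 i, if_pos rfl]
  have hεT : ε T = 0 := hε0 i
  set w := Δ T - T ⊗ₜ[k] (1 : NCM k M) - (1 : NCM k M) ⊗ₜ[k] T with hw_def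
  -- counit axioms on w
  have h1 : TensorProduct.map ε.toLinearMap LinearMap.id w = 0 := by
    apply (TensorProduct.lid k (NCM k M)).injective
    rw [hw_def, map_sub, map_sub, map_sub, map_sub, hL T,
      TensorProduct.map_tmul, TensorProduct.map_tmul, map_zero]
    simp [hεT, TensorProduct.lid_tmul]
  have h2 : TensorProduct.map LinearMap.id ε.toLinearMap w = 0 := by
    apply (TensorProduct.rid k (NCM k M)).injective
    rw [hw_def, map_sub, map_sub, map_sub, map_sub, hR T,
      TensorProduct.map_tmul, TensorProduct.map_tmul, map_zero]
    simp [hεT, TensorProduct.rid_tmul]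
  -- projection onto the augmentation ideal
  let η : k →ₗ[k] NCM k M := Algebra.linearMap k (NCM k M)
  let P : NCM k M →ₗ[k] NCM k M := LinearMap.id - η ∘ₗ ε.toLinearMap
  have hPP : ∀ t : NCM k M ⊗[k] NCM k M, TensorProduct.map P P t
      = t - TensorProduct.map (η ∘ₗ ε.toLinearMap) LinearMap.id t
          - TensorProduct.map LinearMap.id (η ∘ₗ ε.toLinearMap) t
          + TensorProduct.map (η ∘ₗ ε.toLinearMap) (η ∘ₗ ε.toLinearMap) t := by
    intro t
    induction t using TensorProduct.induction_on with
    | zero => simp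
    | tmul u v =>
      simp only [P, TensorProduct.map_tmul, LinearMap.sub_apply, LinearMap.id_coe, id_eq,
        LinearMap.coe_comp, Function.comp_apply, TensorProduct.sub_tmul,
        TensorProduct.tmul_sub]
      abel
    | add t1 t2 ht1 ht2 =>
      simp only [map_add]
      rw [ht1, ht2]
      abel
  have e1 : TensorProduct.map (η ∘ₗ ε.toLinearMap) LinearMap.id w = 0 := by
    have hc := TensorProduct.map_comp η
      (LinearMap.id : NCM k M →ₗ[k] NCM k M) ε.toLinearMap (LinearMap.id : NCM k M →ₗ[k] NCM k M)
    rw [LinearMap.id_comp] at hc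
    rw [hc, LinearMap.comp_apply, h1, map_zero]
  have e2 : TensorProduct.map LinearMap.id (η ∘ₗ ε.toLinearMap) w = 0 := by
    have hc := TensorProduct.map_comp (LinearMap.id : NCM k M →ₗ[k] NCM k M)
      η (LinearMap.id : NCM k M →ₗ[k] NCM k M) ε.toLinearMap
    rw [LinearMap.id_comp] at hc
    rw [hc, LinearMap.comp_apply, h2, map_zero]
  have e3 : TensorProduct.map (η ∘ₗ ε.toLinearMap) (η ∘ₗ ε.toLinearMap) w = 0 := by
    have hc := TensorProduct.map_comp (η ∘ₗ ε.toLinearMap)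
      η (LinearMap.id : NCM k M →ₗ[k] NCM k M) ε.toLinearMap
    rw [LinearMap.comp_id] at hc
    rw [hc, LinearMap.comp_apply, h2, map_zero]
  have hw_eq : TensorProduct.map P P w = w := by
    rw [hPP w, e1, e2, e3]
    abel
  -- divisibility of ρ w by x * y
  have hdvd1 : ∀ u : NCM k M, x ∣ π1 u - algebraMap k C (ε u) :=
    dvd_sub_counit k M π1 ε x
      (fun j => by rw [hπ1 j]; split
                   exacts [dvd_refl x, dvd_zero x]) hε0
  have hdvd2 : ∀ u : NCM k M, y ∣ π2 u - algebraMap k C (ε u) :=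
    dvd_sub_counit k M π2 ε y
      (fun j => by rw [hπ2 j]; split
                   exacts [dvd_refl y, dvd_zero y]) hε0
  have hρP : ∀ t : NCM k M ⊗[k] NCM k M, (x * y) ∣ ρ (TensorProduct.map P P t) := by
    intro t
    induction t using TensorProduct.induction_on with
    | zero => simp
    | tmul u v =>
      rw [TensorProduct.map_tmul, hρ_tmul]
      have hPu : P u = u - algebraMap k (NCM k M) (ε u) := by
        simp [P, η, Algebra.linearMap_apply]
      have hPv : P v = v - algebraMap k (NCM k M) (ε v) := by
        simp [P, η, Algebra.linearMap_apply]
      have hA : x ∣ π1 (P u) := by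
        rw [hPu, map_sub, AlgHom.commutes]; exact hdvd1 u
      have hB : y ∣ π2 (P v) := by
        rw [hPv, map_sub, AlgHom.commutes]; exact hdvd2 v
      obtain ⟨c1, hc1⟩ := hA
      obtain ⟨c2, hc2⟩ := hB
      exact ⟨c1 * c2, by rw [hc1, hc2]; ring⟩
    | add t1 t2 ht1 ht2 =>
      rw [map_add, map_add]
      exact dvd_add ht1 ht2
  have hWdvd : (x * y) ∣ ρ w := hw_eq ▸ hρP w
  obtain ⟨g, hg⟩ := hWdvd
  -- final contradiction
  have hTm : T ^ m = 0 := TgM_pow_eq_zero k M i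
  have hΔ : (Δ T) ^ m = 0 := by rw [← map_pow, hTm, map_zero]
  have hρΔ : ρ (Δ T) = x + y + x * y * g := by
    have hsplit : Δ T = w + T ⊗ₜ[k] (1 : NCM k M) + (1 : NCM k M) ⊗ₜ[k] T := by
      rw [hw_def]; abel
    rw [hsplit, map_add, map_add, hρ_tmul, hρ_tmul, hπ1T, hπ2T, map_one, map_one,
      mul_one, one_mul, ← hg]
    ring
  have hfin : (0 : C) = m • (x ^ (m - 1) * y) := by
    rw [← key_pow x y g m hm2 hxm hy2, ← hρΔ, ← map_pow, hΔ, map_zero]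
  have hsm : (m : k) • (x ^ (m - 1) * y) = 0 := by
    rw [Nat.cast_smul_eq_nsmul]
    exact hfin.symm
  rcases smul_eq_zero.1 hsm with h | h
  · have : m = 0 := Nat.cast_eq_zero.1 h
    omega
  · exact hxyne h
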